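/- Every (6,3)-configuration contains a double-diamond configuration as a substructure; consequently, every D-avoiding 4-cycle system is 3-sparse. -/

import Mathlib

open Finset

/-- The edge set of the 4-cycle `(a, b, c, d)`: edges {a,b}, {b,c}, {c,d}, {d,a}. -/
def cycEdges {V : Type*} [DecidableEq V] (a b c d : V) : Finset (Sym2 V) :=
  {s(a, b), s(b, c), s(c, d), s(d, a)}

/-- `E` is the edge set of a 4-cycle on four distinct vertices. -/
def IsFourCycle {V : Type*} [DecidableEq V] (E : Finset (Sym2 V)) : Prop :=
  ∃ a b c d : V, ([a, b, c, d] : List V).Nodup ∧ E = cycEdges a b c d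

/-- The set of vertices covered by a set of edges. -/
def edgeVerts {V : Type*} [DecidableEq V] (E : Finset (Sym2 V)) : Finset V :=
  E.sup (Sym2.lift ⟨fun x y => ({x, y} : Finset V), fun x y => Finset.pair_comm x y⟩)

/-- A `(k, l)`-configuration: a set of `l` pairwise edge-disjoint 4-cycles whose
union contains exactly `k` vertices. -/
def IsConfiguration {V : Type*} [DecidableEq V] (k l : ℕ)
    (D : Finset (Finset (Sym2 V))) : Prop :=
  D.card = l ∧ (∀ E ∈ D, IsFourCycle E) ∧
    (∀ E ∈ D, ∀ F ∈ D, E ≠ F → Disjoint E F) ∧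
    (D.sup edgeVerts).card = k

/-- `C` is a 4-cycle system: a collection of 4-cycles whose edge sets partition
the edge set of the complete graph on `V`. -/
def IsFourCycleSystem {V : Type*} [DecidableEq V] (C : Finset (Finset (Sym2 V))) : Prop :=
  (∀ E ∈ C, IsFourCycle E) ∧ ∀ e : Sym2 V, ¬ e.IsDiag → ∃! E, E ∈ C ∧ e ∈ E

/-- `C` is a 4-cycle packing: a set of pairwise edge-disjoint 4-cycles. -/
def IsFourCyclePacking {V : Type*} [DecidableEq V] (C : Finset (Finset (Sym2 V))) : Prop :=
  (∀ E ∈ C, IsFourCycle E) ∧ ∀ E ∈ C, ∀ F ∈ C, E ≠ F → Disjoint E F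

/-- `C` is `r`-sparse: it contains no `(j+3, j)`-configuration for `2 ≤ j ≤ r`. -/
def RSparse {V : Type*} [DecidableEq V] (r : ℕ) (C : Finset (Finset (Sym2 V))) : Prop :=
  ∀ j, 2 ≤ j → j ≤ r → ∀ D ⊆ C, ¬ IsConfiguration (j + 3) j D

/-- Two 4-cycles form a double-diamond: they are `(a,b,c,d)` and `(a,e,c,f)`,
sharing the diagonal {a,c}. -/
def IsDoubleDiamond {V : Type*} [DecidableEq V] (E F : Finset (Sym2 V)) : Prop :=
  ∃ a b c d e f : V, ([a, b, c, d, e, f] : List V).Nodup ∧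
    E = cycEdges a b c d ∧ F = cycEdges a e c f

/-- `C` is D-avoiding: no two of its 4-cycles form a double-diamond. -/
def DAvoiding {V : Type*} [DecidableEq V] (C : Finset (Finset (Sym2 V))) : Prop :=
  ∀ E ∈ C, ∀ F ∈ C, ¬ IsDoubleDiamond E F

/-- `C` is strictly `r`-sparse: `r`-sparse and D-avoiding. -/
def StrictlyRSparse {V : Type*} [DecidableEq V] (r : ℕ)
    (C : Finset (Finset (Sym2 V))) : Prop :=
  RSparse r C ∧ DAvoiding C

section Aux

variable {V : Type*} [DecidableEq V]


lemma mem_cycEdges {e : Sym2 V} {a b c d : V} :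
    e ∈ cycEdges a b c d ↔ e = s(a,b) ∨ e = s(b,c) ∨ e = s(c,d) ∨ e = s(d,a) := by
  simp [cycEdges]

lemma cyc_rot (a b c d : V) : cycEdges a b c d = cycEdges b c d a := by
  ext e; simp [cycEdges]; tauto

lemma edgeVerts_cycEdges (a b c d : V) :
    edgeVerts (cycEdges a b c d) = {a, b, c, d} := by
  ext v
  simp [edgeVerts, cycEdges, Finset.sup_insert, Sym2.lift_mk]
  tauto

lemma card_four {a b c d : V} (h : ([a,b,c,d] : List V).Nodup) :
    ({a,b,c,d} : Finset V).card = 4 := by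
  simp only [List.nodup_cons, List.mem_cons, List.mem_singleton, List.nodup_nil] at h
  rw [Finset.card_insert_of_notMem (by simp; tauto),
      Finset.card_insert_of_notMem (by simp; tauto),
      Finset.card_insert_of_notMem (by simp; tauto), Finset.card_singleton]

lemma edgeVerts_card {E : Finset (Sym2 V)} (hE : IsFourCycle E) : (edgeVerts E).card = 4 := by
  obtain ⟨a,b,c,d,h,rfl⟩ := hE
  rw [edgeVerts_cycEdges]; exact card_four h

set_option linter.unusedSectionVars false

lemma nodup_iff {a b c d : V} : ([a,b,c,d] : List V).Nodup ↔
    a ≠ b ∧ a ≠ c ∧ a ≠ d ∧ b ≠ c ∧ b ≠ d ∧ c ≠ d := by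
  simp; tauto

lemma diag_rep {E : Finset (Sym2 V)} (hE : IsFourCycle E) {x y : V}
    (hx : x ∈ edgeVerts E) (hy : y ∈ edgeVerts E) (hxy : x ≠ y)
    (hne : s(x,y) ∉ E) :
    ∃ p q, E = cycEdges x p y q ∧ ({p,q} : Finset V) = edgeVerts E \ {x,y} ∧ p ≠ q := by
  obtain ⟨a,b,c,d,h,rfl⟩ := hE
  rw [edgeVerts_cycEdges] at hx hy ⊢
  rw [nodup_iff] at h
  obtain ⟨hab,hac,had,hbc,hbd,hcd⟩ := h
  simp only [Finset.mem_insert, Finset.mem_singleton] at hx hy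
  rcases hx with rfl|rfl|rfl|rfl <;> rcases hy with rfl|rfl|rfl|rfl
  · exact absurd rfl hxy
  · exact absurd (by simp [mem_cycEdges]) hne
  · exact ⟨b, d, rfl, by ext v; simp; aesop, hbd⟩
  · exact absurd (by simp [mem_cycEdges, Sym2.eq_iff]; try tauto) hne
  · exact absurd (by simp [mem_cycEdges, Sym2.eq_iff]; try tauto) hne
  · exact absurd rfl hxy
  · exact absurd (by simp [mem_cycEdges]) hne
  · exact ⟨c, a, by rw [cyc_rot], by ext v; simp; aesop, fun h => hac h.symm⟩
  · exact ⟨d, b, by rw [cyc_rot, cyc_rot], by ext v; simp; aesop, fun h => hbd h.symm⟩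
  · exact absurd (by simp [mem_cycEdges]) hne
  · exact absurd rfl hxy
  · exact absurd (by simp [mem_cycEdges, Sym2.eq_iff]; try tauto) hne
  · exact absurd (by simp [mem_cycEdges, Sym2.eq_iff]; try tauto) hne
  · exact ⟨a, c, by rw [cyc_rot, cyc_rot, cyc_rot], by ext v; simp; aesop, hac⟩
  · exact absurd (by simp [mem_cycEdges]) hne
  · exact absurd rfl hxy

lemma compl_mem {E : Finset (Sym2 V)} (hE : IsFourCycle E) {x y z w : V}
    (hmem : s(x,y) ∈ E) (hzw : ({z,w} : Finset V) = edgeVerts E \ {x,y}) (hznw : z ≠ w) :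
    s(z,w) ∈ E := by
  obtain ⟨a,b,c,d,h,rfl⟩ := hE
  rw [edgeVerts_cycEdges] at hzw
  rw [nodup_iff] at h
  obtain ⟨hab,hac,had,hbc,hbd,hcd⟩ := h
  simp only [mem_cycEdges, Sym2.eq_iff] at hmem
  have hz : z ∈ ({z,w} : Finset V) := by simp
  have hw : w ∈ ({z,w} : Finset V) := by simp
  rw [hzw] at hz hw
  simp only [Finset.mem_sdiff, Finset.mem_insert, Finset.mem_singleton] at hz hw
  simp only [mem_cycEdges, Sym2.eq_iff]
  rcases hmem with ⟨rfl,rfl⟩|⟨rfl,rfl⟩|⟨rfl,rfl⟩|⟨rfl,rfl⟩|⟨rfl,rfl⟩|⟨rfl,rfl⟩|⟨rfl,rfl⟩|⟨rfl,rfl⟩ <;>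
    aesop

lemma mem_triangle {x y z p q : V} (hp : p ∈ ({x,y,z} : Finset V))
    (hq : q ∈ ({x,y,z} : Finset V)) (hpq : p ≠ q) :
    s(p,q) ∈ ({s(x,y), s(y,z), s(x,z)} : Finset (Sym2 V)) := by
  simp only [Finset.mem_insert, Finset.mem_singleton] at hp hq
  simp only [Finset.mem_insert, Finset.mem_singleton, Sym2.eq_iff]
  rcases hp with rfl|rfl|rfl <;> rcases hq with rfl|rfl|rfl <;> tauto

lemma two_edges {E : Finset (Sym2 V)} (hE : IsFourCycle E) {x y z : V}
    (hs : ({x,y,z} : Finset V) ⊆ edgeVerts E) (hc : ({x,y,z} : Finset V).card = 3) :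
    ∃ e1 e2, e1 ≠ e2 ∧ e1 ∈ E ∧ e2 ∈ E ∧
      e1 ∈ ({s(x,y), s(y,z), s(x,z)} : Finset (Sym2 V)) ∧
      e2 ∈ ({s(x,y), s(y,z), s(x,z)} : Finset (Sym2 V)) := by
  obtain ⟨a,b,c,d,h,rfl⟩ := hE
  rw [edgeVerts_cycEdges] at hs
  have h' := h
  rw [nodup_iff] at h'
  obtain ⟨hab,hac,had,hbc,hbd,hcd⟩ := h'
  -- some vertex of a,b,c,d missing from {x,y,z}
  have hmiss : a ∉ ({x,y,z} : Finset V) ∨ b ∉ ({x,y,z} : Finset V) ∨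
      c ∉ ({x,y,z} : Finset V) ∨ d ∉ ({x,y,z} : Finset V) := by
    by_contra hcon
    push_neg at hcon
    have : ({a,b,c,d} : Finset V) ⊆ {x,y,z} := by
      intro v hv; simp only [Finset.mem_insert, Finset.mem_singleton] at hv
      rcases hv with rfl|rfl|rfl|rfl <;> tauto
    have := Finset.card_le_card this
    rw [card_four h, hc] at this; omega
  have key : ∀ p q : V, p ∈ ({x,y,z} : Finset V) → q ∈ ({x,y,z} : Finset V) → p ≠ q →
      ∀ r s : V, r ∈ ({x,y,z} : Finset V) → s ∈ ({x,y,z} : Finset V) → r ≠ s →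
      s(p,q) ≠ s(r,s) → s(p,q) ∈ cycEdges a b c d → s(r,s) ∈ cycEdges a b c d →
      ∃ e1 e2, e1 ≠ e2 ∧ e1 ∈ cycEdges a b c d ∧ e2 ∈ cycEdges a b c d ∧
        e1 ∈ ({s(x,y), s(y,z), s(x,z)} : Finset (Sym2 V)) ∧
        e2 ∈ ({s(x,y), s(y,z), s(x,z)} : Finset (Sym2 V)) := by
    intro p q hp hq hpq r s hr hs' hrs hne h1 h2
    exact ⟨s(p,q), s(r,s), hne, h1, h2, mem_triangle hp hq hpq, mem_triangle hr hs' hrs⟩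
  have hsub : ∀ v, v ∈ ({x,y,z} : Finset V) → v ∈ ({a,b,c,d} : Finset V) := fun v hv => hs hv
  rcases hmiss with hm|hm|hm|hm
  · -- {x,y,z} = {b,c,d}
    have hb : b ∈ ({x,y,z} : Finset V) ∧ c ∈ ({x,y,z} : Finset V) ∧ d ∈ ({x,y,z} : Finset V) := by
      have hsub2 : ({x,y,z} : Finset V) ⊆ {b,c,d} := by
        intro v hv
        have := hsub v hv
        simp only [Finset.mem_insert, Finset.mem_singleton] at this ⊢
        rcases this with rfl|rfl|rfl|rfl
        · exact absurd hv hm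
        · tauto
        · tauto
        · tauto
      have : ({x,y,z} : Finset V) = {b,c,d} := Finset.eq_of_subset_of_card_le hsub2 (by
        rw [hc]; exact le_trans (Finset.card_insert_le _ _)
          (by have := Finset.card_le_two (a := c) (b := d); omega))
      refine ⟨?_, ?_, ?_⟩ <;> rw [this] <;> simp
    exact key b c hb.1 hb.2.1 hbc c d hb.2.1 hb.2.2 hcd
      (by simp [Sym2.eq_iff]; tauto) (by simp [mem_cycEdges]) (by simp [mem_cycEdges])
  · have hb : a ∈ ({x,y,z} : Finset V) ∧ c ∈ ({x,y,z} : Finset V) ∧ d ∈ ({x,y,z} : Finset V) := by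
      have hsub2 : ({x,y,z} : Finset V) ⊆ {a,c,d} := by
        intro v hv
        have := hsub v hv
        simp only [Finset.mem_insert, Finset.mem_singleton] at this ⊢
        rcases this with rfl|rfl|rfl|rfl
        · tauto
        · exact absurd hv hm
        · tauto
        · tauto
      have : ({x,y,z} : Finset V) = {a,c,d} := Finset.eq_of_subset_of_card_le hsub2 (by
        rw [hc]; exact le_trans (Finset.card_insert_le _ _)
          (by have := Finset.card_le_two (a := c) (b := d); omega))
      refine ⟨?_, ?_, ?_⟩ <;> rw [this] <;> simp
    exact key c d hb.2.1 hb.2.2 hcd d a hb.2.2 hb.1 (fun h => had h.symm)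
      (by simp [Sym2.eq_iff]; tauto) (by simp [mem_cycEdges]) (by simp [mem_cycEdges])
  · have hb : a ∈ ({x,y,z} : Finset V) ∧ b ∈ ({x,y,z} : Finset V) ∧ d ∈ ({x,y,z} : Finset V) := by
      have hsub2 : ({x,y,z} : Finset V) ⊆ {a,b,d} := by
        intro v hv
        have := hsub v hv
        simp only [Finset.mem_insert, Finset.mem_singleton] at this ⊢
        rcases this with rfl|rfl|rfl|rfl
        · tauto
        · tauto
        · exact absurd hv hm
        · tauto
      have : ({x,y,z} : Finset V) = {a,b,d} := Finset.eq_of_subset_of_card_le hsub2 (by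
        rw [hc]; exact le_trans (Finset.card_insert_le _ _)
          (by have := Finset.card_le_two (a := b) (b := d); omega))
      refine ⟨?_, ?_, ?_⟩ <;> rw [this] <;> simp
    exact key a b hb.1 hb.2.1 hab d a hb.2.2 hb.1 (fun h => had h.symm)
      (by simp [Sym2.eq_iff]; tauto) (by simp [mem_cycEdges]) (by simp [mem_cycEdges])
  · have hb : a ∈ ({x,y,z} : Finset V) ∧ b ∈ ({x,y,z} : Finset V) ∧ c ∈ ({x,y,z} : Finset V) := by
      have hsub2 : ({x,y,z} : Finset V) ⊆ {a,b,c} := by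
        intro v hv
        have := hsub v hv
        simp only [Finset.mem_insert, Finset.mem_singleton] at this ⊢
        rcases this with rfl|rfl|rfl|rfl
        · tauto
        · tauto
        · tauto
        · exact absurd hv hm
      have : ({x,y,z} : Finset V) = {a,b,c} := Finset.eq_of_subset_of_card_le hsub2 (by
        rw [hc]; exact le_trans (Finset.card_insert_le _ _)
          (by have := Finset.card_le_two (a := b) (b := c); omega))
      refine ⟨?_, ?_, ?_⟩ <;> rw [this] <;> simp
    exact key a b hb.1 hb.2.1 hab b c hb.2.1 hb.2.2 hbc
      (by simp [Sym2.eq_iff]; tauto) (by simp [mem_cycEdges]) (by simp [mem_cycEdges])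

lemma inter_card_le_two {E F : Finset (Sym2 V)} (hE : IsFourCycle E) (hF : IsFourCycle F)
    (hd : Disjoint E F) : (edgeVerts E ∩ edgeVerts F).card ≤ 2 := by
  by_contra hcon
  push_neg at hcon
  obtain ⟨S, hS, hScard⟩ := Finset.exists_subset_card_eq (n := 3) hcon
  obtain ⟨x, y, z, hxy, hxz, hyz, rfl⟩ := Finset.card_eq_three.mp hScard
  have hsE : ({x,y,z} : Finset V) ⊆ edgeVerts E :=
    fun v hv => (Finset.mem_inter.mp (hS hv)).1
  have hsF : ({x,y,z} : Finset V) ⊆ edgeVerts F :=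
    fun v hv => (Finset.mem_inter.mp (hS hv)).2
  obtain ⟨e1, e2, he12, he1E, he2E, he1T, he2T⟩ := two_edges hE hsE hScard
  obtain ⟨f1, f2, hf12, hf1F, hf2F, hf1T, hf2T⟩ := two_edges hF hsF hScard
  have hTcard : ({s(x,y), s(y,z), s(x,z)} : Finset (Sym2 V)).card ≤ 3 :=
    le_trans (Finset.card_insert_le _ _)
      (by have := Finset.card_le_two (a := s(y,z)) (b := s(x,z)); omega)
  have hET : ({e1, e2} : Finset (Sym2 V)) ⊆ {s(x,y), s(y,z), s(x,z)} := by
    intro e he; simp only [Finset.mem_insert, Finset.mem_singleton] at he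
    rcases he with rfl|rfl <;> assumption
  have hFT : ({f1, f2} : Finset (Sym2 V)) ⊆ {s(x,y), s(y,z), s(x,z)} := by
    intro e he; simp only [Finset.mem_insert, Finset.mem_singleton] at he
    rcases he with rfl|rfl <;> assumption
  have hdisj2 : Disjoint ({e1, e2} : Finset (Sym2 V)) ({f1, f2} : Finset (Sym2 V)) := by
    refine Finset.disjoint_left.mpr ?_
    intro e he hf
    simp only [Finset.mem_insert, Finset.mem_singleton] at he hf
    have heE : e ∈ E := by rcases he with rfl|rfl <;> assumption
    have heF : e ∈ F := by rcases hf with rfl|rfl <;> assumption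
    exact Finset.disjoint_left.mp hd heE heF
  have h4 : (({e1, e2} : Finset (Sym2 V)) ∪ {f1, f2}).card = 4 := by
    rw [Finset.card_union_of_disjoint hdisj2]
    rw [Finset.card_insert_of_notMem (by simpa using he12),
        Finset.card_insert_of_notMem (by simpa using hf12), Finset.card_singleton,
        Finset.card_singleton]
  have := Finset.card_le_card (Finset.union_subset hET hFT)
  rw [h4] at this
  omega

lemma double_diamond_of_shared_diag {E F : Finset (Sym2 V)} (hE : IsFourCycle E)
    (hF : IsFourCycle F) {x y : V} (hxy : x ≠ y)
    (hEF : edgeVerts E ∩ edgeVerts F = {x,y})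
    (hnE : s(x,y) ∉ E) (hnF : s(x,y) ∉ F) : IsDoubleDiamond E F := by
  have hx : x ∈ edgeVerts E ∩ edgeVerts F := by rw [hEF]; simp
  have hy : y ∈ edgeVerts E ∩ edgeVerts F := by rw [hEF]; simp
  rw [Finset.mem_inter] at hx hy
  obtain ⟨p, q, hErep, hpq, hpnq⟩ := diag_rep hE hx.1 hy.1 hxy hnE
  obtain ⟨r, w, hFrep, hrw, hrnw⟩ := diag_rep hF hx.2 hy.2 hxy hnF
  have hpmem : p ∈ edgeVerts E \ ({x,y} : Finset V) := by rw [← hpq]; simp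
  have hqmem : q ∈ edgeVerts E \ ({x,y} : Finset V) := by rw [← hpq]; simp
  have hrmem : r ∈ edgeVerts F \ ({x,y} : Finset V) := by rw [← hrw]; simp
  have hwmem : w ∈ edgeVerts F \ ({x,y} : Finset V) := by rw [← hrw]; simp
  simp only [Finset.mem_sdiff, Finset.mem_insert, Finset.mem_singleton] at hpmem hqmem hrmem hwmem
  push_neg at hpmem hqmem hrmem hwmem
  have hcross : ∀ v : V, v ∈ edgeVerts E → v ∈ edgeVerts F → v = x ∨ v = y := by
    intro v h1 h2
    have : v ∈ edgeVerts E ∩ edgeVerts F := Finset.mem_inter.mpr ⟨h1, h2⟩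
    rw [hEF] at this; simpa using this
  have hpr : p ≠ r := fun h => by
    rcases hcross p hpmem.1 (h ▸ hrmem.1) with h'|h' <;> tauto
  have hpw : p ≠ w := fun h => by
    rcases hcross p hpmem.1 (h ▸ hwmem.1) with h'|h' <;> tauto
  have hqr : q ≠ r := fun h => by
    rcases hcross q hqmem.1 (h ▸ hrmem.1) with h'|h' <;> tauto
  have hqw : q ≠ w := fun h => by
    rcases hcross q hqmem.1 (h ▸ hwmem.1) with h'|h' <;> tauto
  refine ⟨x, p, y, q, r, w, ?_, hErep, hFrep⟩
  have h1 : x ≠ p := fun h => hpmem.2.1 h.symm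
  have h2 : x ≠ q := fun h => hqmem.2.1 h.symm
  have h3 : x ≠ r := fun h => hrmem.2.1 h.symm
  have h4 : x ≠ w := fun h => hwmem.2.1 h.symm
  have h5 : y ≠ p := fun h => hpmem.2.2 h.symm
  have h6 : y ≠ q := fun h => hqmem.2.2 h.symm
  have h7 : y ≠ r := fun h => hrmem.2.2 h.symm
  have h8 : y ≠ w := fun h => hwmem.2.2 h.symm
  have h9 : p ≠ y := hpmem.2.2
  have h10 : q ≠ r := hqr
  simp only [List.nodup_cons, List.mem_cons, List.not_mem_nil, or_false, List.mem_singleton,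
    List.nodup_nil, and_true]
  push_neg
  tauto

lemma pair_union (x y u v : V) : ({x,y} : Finset V) ∪ {u,v} = {x,y,u,v} := by
  ext a; simp; tauto

lemma sdiff_pair {x y u v : V} (h1 : u ≠ x) (h2 : u ≠ y) (h3 : v ≠ x) (h4 : v ≠ y) :
    ({x,y,u,v} : Finset V) \ {x,y} = {u,v} := by
  ext a; simp only [Finset.mem_sdiff, Finset.mem_insert, Finset.mem_singleton]
  constructor
  · rintro ⟨h, hn⟩; push_neg at hn; tauto
  · rintro (rfl|rfl) <;> refine ⟨by tauto, ?_⟩ <;> push_neg <;> exact ⟨by tauto, by tauto⟩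

lemma quad_comm (x y u v : V) : ({x,y,u,v} : Finset V) = {u,v,x,y} := by
  ext a; simp; tauto

set_option maxHeartbeats 1000000 in
lemma config63 : ∀ A : Finset (Finset (Sym2 V)), IsConfiguration 6 3 A →
    ∃ E ∈ A, ∃ F ∈ A, IsDoubleDiamond E F := by
  intro A hconf
  obtain ⟨hcard, hcyc, hdisj, hverts⟩ := hconf
  by_contra hdd
  push_neg at hdd
  obtain ⟨E1, E2, E3, h12, h13, h23, rfl⟩ := Finset.card_eq_three.mp hcard
  have m1 : E1 ∈ ({E1,E2,E3} : Finset (Finset (Sym2 V))) := by simp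
  have m2 : E2 ∈ ({E1,E2,E3} : Finset (Finset (Sym2 V))) := by simp
  have m3 : E3 ∈ ({E1,E2,E3} : Finset (Finset (Sym2 V))) := by simp
  have hE1 := hcyc E1 m1
  have hE2 := hcyc E2 m2
  have hE3 := hcyc E3 m3
  have hd12 := hdisj E1 m1 E2 m2 h12
  have hd13 := hdisj E1 m1 E3 m3 h13
  have hd23 := hdisj E2 m2 E3 m3 h23
  set V1 := edgeVerts E1 with hV1
  set V2 := edgeVerts E2 with hV2
  set V3 := edgeVerts E3 with hV3
  have hc1 : V1.card = 4 := edgeVerts_card hE1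
  have hc2 : V2.card = 4 := edgeVerts_card hE2
  have hc3 : V3.card = 4 := edgeVerts_card hE3
  have hsup : ({E1,E2,E3} : Finset (Finset (Sym2 V))).sup edgeVerts = V1 ∪ (V2 ∪ V3) := by
    rw [Finset.sup_insert, Finset.sup_insert, Finset.sup_singleton]
    rfl
  rw [hsup] at hverts
  -- pairwise intersection cards = 2
  have hUsub : ∀ W1 W2 : Finset V, W1 = V1 ∨ W1 = V2 ∨ W1 = V3 → W2 = V1 ∨ W2 = V2 ∨ W2 = V3 →
      W1 ∪ W2 ⊆ V1 ∪ (V2 ∪ V3) := by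
    intro W1 W2 hW1 hW2
    intro a ha
    rcases Finset.mem_union.mp ha with h|h <;>
      [rcases hW1 with rfl|rfl|rfl; rcases hW2 with rfl|rfl|rfl] <;> simp [Finset.mem_union, h]
  have key2 : ∀ W1 W2 : Finset (Sym2 V), ∀ U1 U2 : Finset V, IsFourCycle W1 → IsFourCycle W2 →
      Disjoint W1 W2 → U1 = edgeVerts W1 → U2 = edgeVerts W2 → U1.card = 4 → U2.card = 4 →
      U1 ∪ U2 ⊆ V1 ∪ (V2 ∪ V3) → (U1 ∩ U2).card = 2 ∧ (U1 ∪ U2).card = 6 := by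
    intro W1 W2 U1 U2 hW1 hW2 hdW hU1 hU2 hcU1 hcU2 hsub
    have h1 := Finset.card_union_add_card_inter U1 U2
    have h2 : (U1 ∪ U2).card ≤ 6 := by
      have := Finset.card_le_card hsub
      omega
    have h3 : (U1 ∩ U2).card ≤ 2 := by
      rw [hU1, hU2]; exact inter_card_le_two hW1 hW2 hdW
    omega
  obtain ⟨hi12, hu12⟩ := key2 E1 E2 V1 V2 hE1 hE2 hd12 hV1 hV2 hc1 hc2
    (hUsub V1 V2 (Or.inl rfl) (Or.inr (Or.inl rfl)))
  obtain ⟨hi13, hu13⟩ := key2 E1 E3 V1 V3 hE1 hE3 hd13 hV1 hV3 hc1 hc3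
    (hUsub V1 V3 (Or.inl rfl) (Or.inr (Or.inr rfl)))
  obtain ⟨hi23, hu23⟩ := key2 E2 E3 V2 V3 hE2 hE3 hd23 hV2 hV3 hc2 hc3
    (hUsub V2 V3 (Or.inr (Or.inl rfl)) (Or.inr (Or.inr rfl)))
  -- each union of two covers everything
  have hcov23 : V2 ∪ V3 = V1 ∪ (V2 ∪ V3) :=
    Finset.eq_of_subset_of_card_le Finset.subset_union_right (by omega)
  have hcov13 : V1 ∪ V3 = V1 ∪ (V2 ∪ V3) :=
    Finset.eq_of_subset_of_card_le (hUsub V1 V3 (Or.inl rfl) (Or.inr (Or.inr rfl))) (by omega)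
  have hcov12 : V1 ∪ V2 = V1 ∪ (V2 ∪ V3) :=
    Finset.eq_of_subset_of_card_le (hUsub V1 V2 (Or.inl rfl) (Or.inr (Or.inl rfl))) (by omega)
  -- splits
  have hsplit1 : (V1 ∩ V2) ∪ (V1 ∩ V3) = V1 := by
    rw [← Finset.inter_union_distrib_left]
    exact Finset.inter_eq_left.mpr (by rw [hcov23]; exact Finset.subset_union_left)
  have hsplit2 : (V2 ∩ V1) ∪ (V2 ∩ V3) = V2 := by
    rw [← Finset.inter_union_distrib_left]
    refine Finset.inter_eq_left.mpr ?_
    rw [hcov13]; intro a ha; simp [Finset.mem_union, ha]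
  have hsplit3 : (V3 ∩ V1) ∪ (V3 ∩ V2) = V3 := by
    rw [← Finset.inter_union_distrib_left]
    refine Finset.inter_eq_left.mpr ?_
    rw [hcov12]; intro a ha; simp [Finset.mem_union, ha]
  -- disjointness of the three shared pairs
  have disj_of : ∀ S T : Finset V, S ∪ T = V1 ∨ S ∪ T = V2 ∨ S ∪ T = V3 →
      S.card = 2 → T.card = 2 → Disjoint S T := by
    intro S T hST hS hT
    have hU4 : (S ∪ T).card = 4 := by rcases hST with h|h|h <;> rw [h] <;> assumption
    have := Finset.card_union_add_card_inter S T
    have h0 : (S ∩ T).card = 0 := by omega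
    rw [Finset.card_eq_zero] at h0
    exact Finset.disjoint_iff_inter_eq_empty.mpr h0
  have hic12 : (V2 ∩ V1).card = 2 := by rw [Finset.inter_comm]; exact hi12
  have disj1 : Disjoint (V1 ∩ V2) (V1 ∩ V3) := disj_of _ _ (Or.inl hsplit1) hi12 hi13
  have disj2 : Disjoint (V2 ∩ V1) (V2 ∩ V3) := disj_of _ _ (Or.inr (Or.inl hsplit2)) hic12 hi23
  have hic13 : (V3 ∩ V1).card = 2 := by rw [Finset.inter_comm]; exact hi13
  have hic23 : (V3 ∩ V2).card = 2 := by rw [Finset.inter_comm]; exact hi23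
  have disj3 : Disjoint (V3 ∩ V1) (V3 ∩ V2) := disj_of _ _ (Or.inr (Or.inr hsplit3)) hic13 hic23
  -- name the six vertices
  obtain ⟨x, y, hxy, hP12⟩ := Finset.card_eq_two.mp hi12
  obtain ⟨u, v, huv, hP13⟩ := Finset.card_eq_two.mp hi13
  obtain ⟨z, w, hzw, hP23⟩ := Finset.card_eq_two.mp hi23
  -- memberships
  have hxm : x ∈ V1 ∩ V2 := by rw [hP12]; simp
  have hym : y ∈ V1 ∩ V2 := by rw [hP12]; simp
  have hum : u ∈ V1 ∩ V3 := by rw [hP13]; simp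
  have hvm : v ∈ V1 ∩ V3 := by rw [hP13]; simp
  have hzm : z ∈ V2 ∩ V3 := by rw [hP23]; simp
  have hwm : w ∈ V2 ∩ V3 := by rw [hP23]; simp
  have hdisj13' : Disjoint (V1 ∩ V2) (V2 ∩ V3) := by
    rw [Finset.inter_comm V1 V2]; exact disj2
  have hdisj23' : Disjoint (V1 ∩ V3) (V2 ∩ V3) := by
    rw [Finset.inter_comm V1 V3, Finset.inter_comm V2 V3]; exact disj3
  -- pairwise distinctness across pairs
  have hxu : x ≠ u := fun h => Finset.disjoint_left.mp disj1 hxm (h ▸ hum)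
  have hxv : x ≠ v := fun h => Finset.disjoint_left.mp disj1 hxm (h ▸ hvm)
  have hyu : y ≠ u := fun h => Finset.disjoint_left.mp disj1 hym (h ▸ hum)
  have hyv : y ≠ v := fun h => Finset.disjoint_left.mp disj1 hym (h ▸ hvm)
  have hxz : x ≠ z := fun h => Finset.disjoint_left.mp hdisj13' hxm (h ▸ hzm)
  have hxw : x ≠ w := fun h => Finset.disjoint_left.mp hdisj13' hxm (h ▸ hwm)
  have hyz : y ≠ z := fun h => Finset.disjoint_left.mp hdisj13' hym (h ▸ hzm)
  have hyw : y ≠ w := fun h => Finset.disjoint_left.mp hdisj13' hym (h ▸ hwm)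
  have huz : u ≠ z := fun h => Finset.disjoint_left.mp hdisj23' hum (h ▸ hzm)
  have huw : u ≠ w := fun h => Finset.disjoint_left.mp hdisj23' hum (h ▸ hwm)
  have hvz : v ≠ z := fun h => Finset.disjoint_left.mp hdisj23' hvm (h ▸ hzm)
  have hvw : v ≠ w := fun h => Finset.disjoint_left.mp hdisj23' hvm (h ▸ hwm)
  -- vertex set descriptions
  have hV1eq : V1 = {x,y,u,v} := by rw [← hsplit1, hP12, hP13, pair_union]
  have hV2eq : V2 = {x,y,z,w} := by
    rw [← hsplit2, Finset.inter_comm V2 V1, hP12, hP23, pair_union]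
  have hV3eq : V3 = {u,v,z,w} := by
    rw [← hsplit3, Finset.inter_comm V3 V1, Finset.inter_comm V3 V2, hP13, hP23, pair_union]
  -- sdiff facts
  have sd1 : V1 \ {x,y} = {u,v} := by
    rw [hV1eq]; exact sdiff_pair (Ne.symm hxu) (Ne.symm hyu) (Ne.symm hxv) (Ne.symm hyv)
  have sd1' : V1 \ {u,v} = {x,y} := by
    rw [hV1eq, quad_comm]; exact sdiff_pair hxu hxv hyu hyv
  have sd2 : V2 \ {x,y} = {z,w} := by
    rw [hV2eq]; exact sdiff_pair (Ne.symm hxz) (Ne.symm hyz) (Ne.symm hxw) (Ne.symm hyw)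
  have sd2' : V2 \ {z,w} = {x,y} := by
    rw [hV2eq, quad_comm]; exact sdiff_pair hxz hxw hyz hyw
  have sd3 : V3 \ {u,v} = {z,w} := by
    rw [hV3eq]; exact sdiff_pair (Ne.symm huz) (Ne.symm hvz) (Ne.symm huw) (Ne.symm hvw)
  have sd3' : V3 \ {z,w} = {u,v} := by
    rw [hV3eq, quad_comm]; exact sdiff_pair huz huw hvz hvw
  -- within-cycle complement iffs
  have f1 : s(x,y) ∈ E1 ↔ s(u,v) ∈ E1 :=
    ⟨fun h => compl_mem hE1 h sd1.symm huv, fun h => compl_mem hE1 h sd1'.symm hxy⟩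
  have f2 : s(x,y) ∈ E2 ↔ s(z,w) ∈ E2 :=
    ⟨fun h => compl_mem hE2 h sd2.symm hzw, fun h => compl_mem hE2 h sd2'.symm hxy⟩
  have f3 : s(u,v) ∈ E3 ↔ s(z,w) ∈ E3 :=
    ⟨fun h => compl_mem hE3 h sd3.symm hzw, fun h => compl_mem hE3 h sd3'.symm huv⟩
  -- exactly-one facts
  have x12 : ¬(s(x,y) ∈ E1 ∧ s(x,y) ∈ E2) := fun h => Finset.disjoint_left.mp hd12 h.1 h.2
  have x13 : ¬(s(u,v) ∈ E1 ∧ s(u,v) ∈ E3) := fun h => Finset.disjoint_left.mp hd13 h.1 h.2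
  have x23 : ¬(s(z,w) ∈ E2 ∧ s(z,w) ∈ E3) := fun h => Finset.disjoint_left.mp hd23 h.1 h.2
  have n12 : s(x,y) ∈ E1 ∨ s(x,y) ∈ E2 := by
    by_contra h
    push_neg at h
    exact hdd E1 m1 E2 m2 (double_diamond_of_shared_diag hE1 hE2 hxy hP12 h.1 h.2)
  have n13 : s(u,v) ∈ E1 ∨ s(u,v) ∈ E3 := by
    by_contra h
    push_neg at h
    exact hdd E1 m1 E3 m3 (double_diamond_of_shared_diag hE1 hE3 huv hP13 h.1 h.2)
  have n23 : s(z,w) ∈ E2 ∨ s(z,w) ∈ E3 := by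
    by_contra h
    push_neg at h
    exact hdd E2 m2 E3 m3 (double_diamond_of_shared_diag hE2 hE3 hzw hP23 h.1 h.2)
  by_cases hA : s(x,y) ∈ E1
  · have h2 : s(x,y) ∉ E2 := fun h => x12 ⟨hA, h⟩
    have h3 : s(z,w) ∉ E2 := fun h => h2 (f2.mpr h)
    have h4 : s(z,w) ∈ E3 := n23.resolve_left h3
    have h5 : s(u,v) ∈ E3 := f3.mpr h4
    have h6 : s(u,v) ∉ E1 := fun h => x13 ⟨h, h5⟩
    exact h6 (f1.mp hA)
  · have h2 : s(x,y) ∈ E2 := n12.resolve_left hA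
    have h3 : s(z,w) ∈ E2 := f2.mp h2
    have h4 : s(z,w) ∉ E3 := fun h => x23 ⟨h3, h⟩
    have h5 : s(u,v) ∉ E3 := fun h => h4 (f3.mp h)
    have h6 : s(u,v) ∈ E1 := n13.resolve_right h5
    exact hA (f1.mpr h6)

end Aux

/-- Every `(6,3)`-configuration contains a double-diamond; consequently every
D-avoiding 4-cycle system is 3-sparse. -/
theorem six_three_contains_double_diamond {V : Type*} [DecidableEq V] :
    (∀ A : Finset (Finset (Sym2 V)), IsConfiguration 6 3 A →
      ∃ E ∈ A, ∃ F ∈ A, IsDoubleDiamond E F) ∧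
    (∀ C : Finset (Finset (Sym2 V)), IsFourCycleSystem C → DAvoiding C → RSparse 3 C) := by
  constructor
  · exact config63
  · intro C _hC hD
    intro j hj2 hj3 D hDC hconf
    interval_cases j
    · obtain ⟨hcard, hcyc, hdisj, hverts⟩ := hconf
      obtain ⟨E, F, hEF, rfl⟩ := Finset.card_eq_two.mp hcard
      have mE : E ∈ ({E,F} : Finset (Finset (Sym2 V))) := by simp
      have mF : F ∈ ({E,F} : Finset (Finset (Sym2 V))) := by simp
      have hE := hcyc E mE
      have hF := hcyc F mF
      have hd := hdisj E mE F mF hEF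
      have hsup : ({E,F} : Finset (Finset (Sym2 V))).sup edgeVerts
          = edgeVerts E ∪ edgeVerts F := by
        rw [Finset.sup_insert, Finset.sup_singleton]; rfl
      rw [hsup] at hverts
      have h1 := Finset.card_union_add_card_inter (edgeVerts E) (edgeVerts F)
      have hcE := edgeVerts_card hE
      have hcF := edgeVerts_card hF
      have h2 := inter_card_le_two hE hF hd
      omega
    · obtain ⟨E, hE, F, hF, hdd⟩ := config63 D hconf
      exact hD E (hDC hE) F (hDC hF) hdd
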